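/- Let X₀ ⊆ ℝ² be compact and convex with nonempty interior and width W, and let I be a line segment of length L > 0 whose line ℓ_I is disjoint from X₀, with X₀ contained in the interior of P_I. If W < L, then there exist T > 0 and a transformation family {R_t}_{t∈[0,T]} that passes X₀ fully through I. -/

import Mathlib

open Set Real RealInnerProductSpace

noncomputable section

abbrev Pt := EuclideanSpace ℝ (Fin 2)

/-- The closed segment `[a, b]`. -/
def seg (a b : Pt) : Set Pt := segment ℝ a b

/-- The line through `a` and `b`. -/
def lineThrough (a b : Pt) : Set Pt := {p : Pt | ∃ s : ℝ, p = a + s • (b - a)}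

/-- Rotation of the plane by angle `α` about the origin. -/
def rot (α : ℝ) (p : Pt) : Pt :=
  WithLp.toLp 2 ![Real.cos α * p 0 - Real.sin α * p 1, Real.sin α * p 0 + Real.cos α * p 1]

/-- A vector normal to the segment from `a` to `b`. -/
def nvec (a b : Pt) : Pt := WithLp.toLp 2 ![-(b 1 - a 1), b 0 - a 0]

/-- The closed half-plane bounded by the line through `a` and `b` containing `c`. -/
def halfPlane (a b c : Pt) : Set Pt :=
  if 0 ≤ ⟪nvec a b, c - a⟫ then {p : Pt | 0 ≤ ⟪nvec a b, p - a⟫}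
  else {p : Pt | ⟪nvec a b, p - a⟫ ≤ 0}

/-- Orthogonal projection of `p` onto the line through `a` and `b`. -/
def lineProj (a b p : Pt) : Pt :=
  a + (⟪p - a, b - a⟫ / ⟪b - a, b - a⟫) • (b - a)

/-- A continuous family of direct planar isometries indexed by `t ∈ [0, T]`,
each of the form `p ↦ rot (θ t) (p - c) + s t + c`. -/
structure TransFam (c : Pt) (T : ℝ) where
  θ : ℝ → ℝ
  trans : ℝ → Pt
  contθ : ContinuousOn θ (Icc 0 T)
  contTrans : ContinuousOn trans (Icc 0 T)

/-- The isometry at time `t`. -/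
def TransFam.R {c : Pt} {T : ℝ} (F : TransFam c T) (t : ℝ) (p : Pt) : Pt :=
  rot (F.θ t) (p - c) + F.trans t + c

/-- The family `F` attempts to pass `X₀` through the segment with endpoints `e₁, e₂`,
where `c ∈ X₀` is the reference point (so `halfPlane e₁ e₂ c` is the half-plane containing
`X₀`). -/
def AttemptsPass {c : Pt} {T : ℝ} (F : TransFam c T) (X₀ : Set Pt) (e₁ e₂ : Pt) : Prop :=
  ∃ t₀ t₁ : ℝ, 0 < t₀ ∧ t₀ ≤ t₁ ∧ t₁ ≤ T ∧
    (∀ t ∈ Icc t₀ t₁, (F.R t '' X₀ ∩ (seg e₁ e₂ \ {e₁, e₂})).Nonempty) ∧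
    (∀ t ∈ Ico 0 t₀, F.R t '' X₀ ⊆ halfPlane e₁ e₂ c) ∧
    (∀ t ∈ Ico 0 T, e₁ ∉ F.R t '' X₀ ∧ e₂ ∉ F.R t '' X₀)

/-- Penetration distance of `X₀` through the segment `[e₁, e₂]` under the family `F`:
the supremum of distances to the line `ℓ_I` over points of `R_T(X₀)` outside the
half-plane `P_I` whose orthogonal projection onto `ℓ_I` lies in `I` (`0` if empty,
via `Real.sSup_empty`). -/
def penetration {c : Pt} {T : ℝ} (F : TransFam c T) (X₀ : Set Pt) (e₁ e₂ : Pt) : ℝ :=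
  sSup {d : ℝ | ∃ p, p ∈ F.R T '' X₀ ∧ p ∉ halfPlane e₁ e₂ c ∧
      lineProj e₁ e₂ p ∈ seg e₁ e₂ ∧ d = Metric.infDist p (lineThrough e₁ e₂)}

/-- The width of a planar set: the infimum over unit directions `u` of
`sup ⟪x,u⟫ - inf ⟪x,u⟫` over `x ∈ K`. -/
def width (K : Set Pt) : ℝ :=
  sInf {w : ℝ | ∃ u : Pt, ‖u‖ = 1 ∧
    w = sSup ((fun x => ⟪x, u⟫) '' K) - sInf ((fun x => ⟪x, u⟫) '' K)}

/-- Penetration of `X₀` into the circle `C` through the chord `[e₁, e₂]` under `F`. -/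
def penetrationCircle {c : Pt} {T : ℝ} (F : TransFam c T) (X₀ : Set Pt) (C : Set Pt)
    (e₁ e₂ : Pt) : ℝ :=
  sSup {d : ℝ | ∃ p₁ p₂, p₁ ∈ F.R T '' X₀ ∩ C ∧ p₂ ∈ F.R T '' X₀ \ halfPlane e₁ e₂ c ∧
      d = ‖p₁ - p₂‖}


/-- The set of penetration distances achievable by passing `X₀` through some segment of
length `L` whose line is disjoint from `X₀` and with `X₀` in the interior of the
corresponding half-plane, under some transformation family attempting the pass. -/
def penSet (X₀ : Set Pt) (c : Pt) (L : ℝ) : Set ℝ :=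
  {p : ℝ | ∃ e₁ e₂ : Pt, e₁ ≠ e₂ ∧ ‖e₂ - e₁‖ = L ∧
    lineThrough e₁ e₂ ∩ X₀ = ∅ ∧ X₀ ⊆ interior (halfPlane e₁ e₂ c) ∧
    ∃ T : ℝ, 0 < T ∧ ∃ F : TransFam c T, AttemptsPass F X₀ e₁ e₂ ∧
      p = penetration F X₀ e₁ e₂}

/-- The axis-aligned rectangle `[0, L] × [0, W]`. -/
def rect (L W : ℝ) : Set Pt := {p : Pt | p 0 ∈ Icc 0 L ∧ p 1 ∈ Icc 0 W}


lemma Pt.ext2 {p q : Pt} (h0 : p 0 = q 0) (h1 : p 1 = q 1) : p = q := by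
  apply PiLp.ext; intro i; fin_cases i <;> assumption

lemma inner2 (x y : Pt) : ⟪x, y⟫ = x 0 * y 0 + x 1 * y 1 := by
  simp [PiLp.inner_apply, RCLike.inner_apply, Fin.sum_univ_two]; ring

lemma rot_zero (p : Pt) : rot 0 p = p := by
  apply Pt.ext2 <;> simp [rot]

lemma rot_inner (α : ℝ) (x y : Pt) : ⟪rot α x, rot α y⟫ = ⟪x, y⟫ := by
  simp only [inner2, rot]
  simp only [WithLp.ofLp_toLp, Matrix.cons_val_zero, Matrix.cons_val_one, Matrix.head_cons]
  linear_combination (x 0 * y 0 + x 1 * y 1) * (Real.sin_sq_add_cos_sq α)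

lemma rot_adjoint (α : ℝ) (x y : Pt) : ⟪x, rot α y⟫ = ⟪rot (-α) x, y⟫ := by
  simp only [inner2, rot, Real.cos_neg, Real.sin_neg]
  simp only [WithLp.ofLp_toLp, Matrix.cons_val_zero, Matrix.cons_val_one, Matrix.head_cons]
  ring

lemma norm_rot (α : ℝ) (x : Pt) : ‖rot α x‖ = ‖x‖ := by
  have h := rot_inner α x x
  rw [real_inner_self_eq_norm_sq, real_inner_self_eq_norm_sq] at h
  nlinarith [norm_nonneg (rot α x), norm_nonneg x]

lemma exists_angle (C S : ℝ) (h : C^2 + S^2 = 1) : ∃ α, Real.cos α = C ∧ Real.sin α = S := by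
  have hC1 : -1 ≤ C := by nlinarith
  have hC2 : C ≤ 1 := by nlinarith
  rcases le_or_gt 0 S with hS | hS
  · refine ⟨Real.arccos C, Real.cos_arccos hC1 hC2, ?_⟩
    rw [Real.sin_arccos]
    rw [show 1 - C^2 = S^2 by linarith, Real.sqrt_sq hS]
  · refine ⟨-Real.arccos C, by rw [Real.cos_neg, Real.cos_arccos hC1 hC2], ?_⟩
    rw [Real.sin_neg, Real.sin_arccos]
    rw [show 1 - C^2 = S^2 by linarith, Real.sqrt_sq_eq_abs, abs_of_neg hS, neg_neg]

lemma exists_rot (u d : Pt) (hu : ‖u‖ = 1) (hd : ‖d‖ = 1) : ∃ α, rot α u = d := by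
  have hu2 : u 0 ^ 2 + u 1 ^ 2 = 1 := by
    have := real_inner_self_eq_norm_sq u
    rw [hu, inner2] at this; nlinarith
  have hd2 : d 0 ^ 2 + d 1 ^ 2 = 1 := by
    have := real_inner_self_eq_norm_sq d
    rw [hd, inner2] at this; nlinarith
  obtain ⟨α, hc, hs⟩ := exists_angle (u 0 * d 0 + u 1 * d 1) (u 0 * d 1 - u 1 * d 0) (by nlinarith)
  refine ⟨α, Pt.ext2 ?_ ?_⟩ <;> simp only [rot, hc, hs, WithLp.ofLp_toLp, Matrix.cons_val_zero, Matrix.cons_val_one, Matrix.head_cons]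
  · linear_combination d 0 * hu2
  · linear_combination d 1 * hu2

lemma decomp (a b v : Pt) (h : ⟪nvec a b, v⟫ = 0) :
    ⟪b - a, b - a⟫ • v = ⟪b - a, v⟫ • (b - a) := by
  simp only [inner2, nvec, WithLp.ofLp_toLp, Matrix.cons_val_zero, Matrix.cons_val_one, Matrix.head_cons] at h
  apply Pt.ext2 <;>
    simp only [inner2, PiLp.smul_apply, PiLp.sub_apply, smul_eq_mul]
  · linear_combination (-(b 1 - a 1)) * h
  · linear_combination (b 0 - a 0) * h

lemma eq_affine (e₁ e₂ q : Pt) (he : e₁ ≠ e₂) (h : ⟪nvec e₁ e₂, q - e₁⟫ = 0) :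
    q = e₁ + (⟪e₂ - e₁, q - e₁⟫ / ⟪e₂ - e₁, e₂ - e₁⟫) • (e₂ - e₁) := by
  have hne : (e₂ - e₁ : Pt) ≠ 0 := sub_ne_zero.mpr he.symm
  have hΔ : ⟪(e₂ - e₁ : Pt), (e₂ - e₁ : Pt)⟫ ≠ (0:ℝ) := inner_self_ne_zero.mpr hne
  have h2 := decomp e₁ e₂ (q - e₁) h
  have : (q - e₁ : Pt) = (⟪(e₂ - e₁:Pt), (q - e₁:Pt)⟫ / ⟪(e₂ - e₁:Pt), (e₂-e₁:Pt)⟫) • (e₂ - e₁) := by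
    rw [div_eq_inv_mul, ← smul_smul, ← h2, smul_smul, inv_mul_cancel₀ hΔ, one_smul]
  rw [← this]; abel

lemma mem_lineThrough (e₁ e₂ q : Pt) (he : e₁ ≠ e₂) (h : ⟪nvec e₁ e₂, q - e₁⟫ = 0) :
    q ∈ lineThrough e₁ e₂ :=
  ⟨_, eq_affine e₁ e₂ q he h⟩

lemma mem_seg_open (e₁ e₂ q : Pt) (he : e₁ ≠ e₂) (hn : ⟪nvec e₁ e₂, q - e₁⟫ = 0)
    (h0 : 0 < ⟪(e₂ - e₁ : Pt), (q - e₁ : Pt)⟫)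
    (h1 : ⟪(e₂ - e₁ : Pt), (q - e₁ : Pt)⟫ < ⟪(e₂ - e₁ : Pt), (e₂ - e₁ : Pt)⟫) :
    q ∈ seg e₁ e₂ \ {e₁, e₂} := by
  have hne : (e₂ - e₁ : Pt) ≠ 0 := sub_ne_zero.mpr he.symm
  have hΔ : (0:ℝ) < ⟪(e₂ - e₁ : Pt), (e₂ - e₁ : Pt)⟫ := by
    rw [real_inner_self_eq_norm_sq]; exact pow_pos (norm_pos_iff.mpr hne) 2
  set s : ℝ := ⟪(e₂ - e₁ : Pt), (q - e₁ : Pt)⟫ / ⟪(e₂ - e₁ : Pt), (e₂-e₁ : Pt)⟫ with hs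
  have hq := eq_affine e₁ e₂ q he hn
  have hs0 : 0 < s := div_pos h0 hΔ
  have hs1 : s < 1 := (div_lt_one hΔ).mpr h1
  constructor
  · rw [seg, segment_eq_image']
    exact ⟨s, ⟨hs0.le, hs1.le⟩, hq.symm⟩
  · rintro (rfl | rfl)
    · apply absurd h0; simp
    · apply absurd h1; simp

set_option maxHeartbeats 1000000 in
lemma main_aux (X₀ : Set Pt) (c : Pt) (hc : c ∈ X₀)
    (hX₀c : IsCompact X₀)
    (e₁ e₂ : Pt) (he : e₁ ≠ e₂)
    (hdisj : lineThrough e₁ e₂ ∩ X₀ = ∅)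
    (hsub : X₀ ⊆ interior (halfPlane e₁ e₂ c))
    (hW : width X₀ < ‖e₂ - e₁‖)
    (σ : ℝ) (hσ2 : σ^2 = 1)
    (hHP : halfPlane e₁ e₂ c = {p : Pt | 0 ≤ σ * ⟪nvec e₁ e₂, p - e₁⟫}) :
    ∃ T : ℝ, 0 < T ∧ ∃ F : TransFam c T,
      AttemptsPass F X₀ e₁ e₂ ∧ F.R T '' X₀ ⊆ (halfPlane e₁ e₂ c)ᶜ := by
  have hσ0 : σ ≠ 0 := by intro h; rw [h] at hσ2; norm_num at hσ2
  set n : Pt := nvec e₁ e₂ with hn_def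
  set Δ : Pt := e₂ - e₁ with hΔ_def
  set L : ℝ := ‖Δ‖ with hL_def
  have hΔne : Δ ≠ 0 := sub_ne_zero.mpr he.symm
  have hL : 0 < L := norm_pos_iff.mpr hΔne
  have hΔΔ : ⟪Δ, Δ⟫ = L^2 := by rw [real_inner_self_eq_norm_sq]
  have hnΔ : ⟪n, Δ⟫ = 0 := by
    simp only [hn_def, hΔ_def, inner2, nvec, WithLp.ofLp_toLp, Matrix.cons_val_zero, Matrix.cons_val_one,
      Matrix.head_cons, PiLp.sub_apply]
    ring
  have hnn : ⟪n, n⟫ = L^2 := by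
    rw [← hΔΔ]
    simp only [hn_def, hΔ_def, inner2, nvec, WithLp.ofLp_toLp, Matrix.cons_val_zero, Matrix.cons_val_one,
      Matrix.head_cons, PiLp.sub_apply]
    ring
  have hnorm_n : ‖n‖ = L := by
    have h1 : ‖n‖^2 = L^2 := by rw [← real_inner_self_eq_norm_sq, hnn]
    nlinarith [norm_nonneg n]
  set g : Pt → ℝ := fun p => σ * ⟪n, p - e₁⟫ with hg_def
  set f : Pt → ℝ := fun p => ⟪Δ, p - e₁⟫ with hf_def
  have hge₁ : g e₁ = 0 := by simp [hg_def]
  have hge₂ : g e₂ = 0 := by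
    simp only [hg_def, ← hΔ_def, hnΔ, mul_zero]
  have hfe₂ : f e₂ = L^2 := by simp only [hf_def, ← hΔ_def, hΔΔ]
  have hpos : ∀ p ∈ X₀, 0 < g p := by
    intro p hp
    have h0 : 0 ≤ g p := by
      have h1 := interior_subset (hsub hp)
      rw [hHP] at h1
      exact h1
    rcases h0.lt_or_eq with h | h
    · exact h
    · exfalso
      have hzero : ⟪n, p - e₁⟫ = 0 := by
        rcases mul_eq_zero.mp h.symm with h' | h'
        · exact absurd h' hσ0
        · exact h'
      have hmem : p ∈ lineThrough e₁ e₂ ∩ X₀ := ⟨mem_lineThrough e₁ e₂ p he hzero, hp⟩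
      rw [hdisj] at hmem
      exact hmem
  have hgc : 0 < g c := hpos c hc
  -- width direction
  have hS_ne : {w : ℝ | ∃ u : Pt, ‖u‖ = 1 ∧
      w = sSup ((fun x => ⟪x, u⟫) '' X₀) - sInf ((fun x => ⟪x, u⟫) '' X₀)}.Nonempty := by
    refine ⟨_, WithLp.toLp 2 ![1,0], ?_, rfl⟩
    rw [EuclideanSpace.norm_eq]
    simp [Fin.sum_univ_two]
  obtain ⟨w, hwmem, hwL⟩ := exists_lt_of_csInf_lt hS_ne hW
  obtain ⟨u, hu, hw_eq⟩ := hwmem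
  have hcontu : Continuous (fun x : Pt => ⟪x, u⟫) := continuous_id.inner continuous_const
  have himg : IsCompact ((fun x : Pt => ⟪x, u⟫) '' X₀) := hX₀c.image hcontu
  set iu : ℝ := sInf ((fun x : Pt => ⟪x, u⟫) '' X₀) with hiu_def
  set su : ℝ := sSup ((fun x : Pt => ⟪x, u⟫) '' X₀) with hsu_def
  have hiu : ∀ p ∈ X₀, iu ≤ ⟪p, u⟫ := fun p hp => csInf_le himg.bddBelow ⟨p, hp, rfl⟩
  have hsu : ∀ p ∈ X₀, ⟪p, u⟫ ≤ su := fun p hp => le_csSup himg.bddAbove ⟨p, hp, rfl⟩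
  -- bound ρ
  obtain ⟨r, hr⟩ := (Metric.isBounded_iff_subset_closedBall c).mp hX₀c.isBounded
  set ρ : ℝ := max r 0 with hρ_def
  have hρ0 : 0 ≤ ρ := le_max_right _ _
  have hρ : ∀ p ∈ X₀, ‖p - c‖ ≤ ρ := by
    intro p hp
    have h1 := hr hp
    rw [Metric.mem_closedBall, dist_eq_norm] at h1
    exact h1.trans (le_max_left _ _)
  -- rotation
  set d : Pt := L⁻¹ • Δ with hd_def
  have hd1 : ‖d‖ = 1 := by
    rw [hd_def, norm_smul, norm_inv, Real.norm_eq_abs, abs_of_pos hL, ← hL_def]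
    field_simp
  obtain ⟨α, hα⟩ := exists_rot u d hu hd1
  have hLd : L • d = Δ := by rw [hd_def, smul_smul]; field_simp; exact one_smul _ _
  have hrotin : ∀ v : Pt, ⟪Δ, rot α v⟫ = L * ⟪u, v⟫ := by
    intro v
    rw [← hLd, real_inner_smul_left, ← hα, rot_inner]
  set m' : Pt := σ • (L⁻¹ • n) with hm'_def
  have hnm' : σ * ⟪n, m'⟫ = L := by
    have hinv : L⁻¹ * L ^ 2 = L := by rw [sq]; field_simp
    rw [hm'_def, real_inner_smul_right, real_inner_smul_right, hnn,
      show σ * (σ * (L⁻¹ * L^2)) = σ^2 * (L⁻¹ * L^2) from by ring, hσ2, one_mul, hinv]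
  have hΔm' : ⟪Δ, m'⟫ = 0 := by
    rw [hm'_def, real_inner_smul_right, real_inner_smul_right, real_inner_comm, hnΔ]
    ring
  -- constants
  set K : ℝ := ρ + 1 with hK_def
  have hKpos : 0 < K := by rw [hK_def]; linarith
  set μ : ℝ := (L^2/2 - L*((iu+su)/2 - ⟪u, c⟫) - ⟪Δ, c - e₁⟫)/L^2 with hμ_def
  have hμL2 : μ * L^2 = L^2/2 - L*((iu+su)/2 - ⟪u, c⟫) - ⟪Δ, c - e₁⟫ := by
    rw [hμ_def]; field_simp
  set s₁ : Pt := μ • Δ + K • m' with hs₁_def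
  have hns₁ : σ * ⟪n, s₁⟫ = K * L := by
    rw [hs₁_def, inner_add_right, real_inner_smul_right, real_inner_smul_right, hnΔ]
    linear_combination K * hnm'
  have hΔs₁ : ⟪Δ, s₁⟫ = μ * L^2 := by
    rw [hs₁_def, inner_add_right, real_inner_smul_right, real_inner_smul_right, hΔm', hΔΔ]
    ring
  set Y : Pt → Pt := fun p => rot α (p - c) + s₁ + c with hY_def
  have hfYcore : ∀ p : Pt, f (Y p) = L * ⟪u, p - c⟫ + μ * L^2 + f c := by
    intro p
    simp only [hf_def, hY_def]
    rw [show rot α (p - c) + s₁ + c - e₁ = rot α (p - c) + (s₁ + (c - e₁)) from by abel,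
      inner_add_right, inner_add_right, hrotin, hΔs₁]
    ring
  have hfY : ∀ p : Pt, f (Y p) = L * ⟪u, p⟫ - L*(iu+su)/2 + L^2/2 := by
    intro p
    rw [hfYcore, inner_sub_right]
    simp only [hf_def]
    linear_combination hμL2
  have hfY_bounds : ∀ p ∈ X₀, 0 < f (Y p) ∧ f (Y p) < L^2 := by
    intro p hp
    have h1 : iu ≤ ⟪u, p⟫ := by rw [real_inner_comm]; exact hiu p hp
    have h2 : ⟪u, p⟫ ≤ su := by rw [real_inner_comm]; exact hsu p hp
    have hwlt : su - iu < L := hw_eq ▸ hwL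
    have hb1 := mul_le_mul_of_nonneg_left h1 hL.le
    have hb2 := mul_le_mul_of_nonneg_left h2 hL.le
    have hb3 := mul_lt_mul_of_pos_left hwlt hL
    rw [hfY]
    constructor
    · linarith
    · linarith
  set G : Pt → ℝ := fun p => g (Y p) with hG_def
  have hGfor : ∀ p : Pt, G p = σ * ⟪n, rot α (p - c)⟫ + K*L + g c := by
    intro p
    simp only [hG_def, hg_def, hY_def]
    rw [show rot α (p - c) + s₁ + c - e₁ = rot α (p - c) + (s₁ + (c - e₁)) from by abel,
      inner_add_right, inner_add_right]
    linear_combination hns₁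
  have hσcases : σ = 1 ∨ σ = -1 := by
    have h1 : (σ - 1) * (σ + 1) = 0 := by linear_combination hσ2
    rcases mul_eq_zero.mp h1 with h | h
    · left; linarith
    · right; linarith
  have habsσ : |σ| = 1 := by
    rcases hσcases with h | h <;> rw [h] <;> norm_num
  have hrotbound : ∀ β : ℝ, ∀ p ∈ X₀, |σ * ⟪n, rot β (p - c)⟫| ≤ L * ρ := by
    intro β p hp
    rw [abs_mul, habsσ, one_mul]
    calc |⟪n, rot β (p - c)⟫| ≤ ‖n‖ * ‖rot β (p - c)‖ := abs_real_inner_le_norm _ _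
      _ = L * ‖p - c‖ := by rw [hnorm_n, norm_rot]
      _ ≤ L * ρ := mul_le_mul_of_nonneg_left (hρ p hp) hL.le
  set B' : ℝ := g c + K*L + L*ρ with hB'_def
  have hGub : ∀ p ∈ X₀, G p ≤ B' := by
    intro p hp
    have h1 := (abs_le.mp (hrotbound α p hp)).2
    rw [hGfor, hB'_def]; linarith
  have hGlb : ∀ p ∈ X₀, g c + L ≤ G p := by
    intro p hp
    have h1 := (abs_le.mp (hrotbound α p hp)).1
    rw [hGfor]
    have hKL : K * L = ρ * L + L := by rw [hK_def]; ring
    linarith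
  have hB'pos : 0 < B' := by
    rw [hB'_def]
    have h1 := mul_pos hKpos hL
    have h2 := mul_nonneg hL.le hρ0
    linarith
  -- min point
  have hGcont : Continuous G := by
    have hform : G = fun p => σ * ⟪rot (-α) n, p - c⟫ + (K*L + g c) := by
      funext p
      rw [hGfor, rot_adjoint]
      ring
    rw [hform]
    have h1 : Continuous (fun p : Pt => ⟪rot (-α) n, p - c⟫) :=
      continuous_const.inner (continuous_id.sub continuous_const)
    fun_prop
  obtain ⟨pstar, hpstar, hmin⟩ := hX₀c.exists_isMinOn ⟨c, hc⟩ hGcont.continuousOn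
  set A : ℝ := G pstar with hA_def
  have hA_le : ∀ p ∈ X₀, A ≤ G p := fun p hp => hmin hp
  have hA_pos : 0 < A := by
    have := hGlb pstar hpstar
    rw [hA_def]; linarith
  have hA_ub : A ≤ B' := hGub pstar hpstar
  set T₃ : ℝ := B'/L + 1 with hT₃_def
  have hT₃L : T₃ * L = B' + L := by rw [hT₃_def]; field_simp
  have hT₃Lpos : 0 < T₃ * L := by rw [hT₃L]; linarith
  set tstar : ℝ := 2 + A/(T₃*L) with htstar_def
  have htstar2 : 2 < tstar := by
    rw [htstar_def]
    have := div_pos hA_pos hT₃Lpos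
    linarith
  have htstar3 : tstar < 3 := by
    rw [htstar_def]
    have h1 : A/(T₃*L) < 1 := (div_lt_one hT₃Lpos).mpr (by rw [hT₃L]; linarith)
    linarith
  have htstar_mul : (tstar - 2) * (T₃ * L) = A := by
    rw [htstar_def]
    rw [show 2 + A/(T₃*L) - 2 = A/(T₃*L) by ring, div_mul_cancel₀ _ hT₃Lpos.ne']
  -- family
  set θf : ℝ → ℝ := fun t => α * min (max (t-1) 0) 1 with hθf_def
  set trf : ℝ → Pt := fun t => (min t 1) • s₁ - ((max (t-2) 0) * T₃) • m' with htrf_def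
  have hθc : ContinuousOn θf (Icc 0 3) := by
    apply Continuous.continuousOn
    rw [hθf_def]; fun_prop
  have htrc : ContinuousOn trf (Icc 0 3) := by
    apply Continuous.continuousOn
    rw [htrf_def]; fun_prop
  set F : TransFam c 3 := ⟨θf, trf, hθc, htrc⟩ with hF_def
  have hR : ∀ t p, F.R t p = rot (θf t) (p - c) + trf t + c := fun t p => rfl
  have hgR : ∀ t p, g (F.R t p) =
      σ * ⟪n, rot (θf t) (p - c)⟫ + (min t 1) * (K * L) - (max (t-2) 0) * T₃ * L + g c := by
    intro t p
    rw [hR]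
    simp only [hg_def, htrf_def]
    rw [show rot (θf t) (p - c) + ((min t 1) • s₁ - ((max (t-2) 0) * T₃) • m') + c - e₁
        = rot (θf t) (p - c) + ((min t 1) • s₁ - ((max (t-2) 0) * T₃) • m' + (c - e₁)) from by abel,
      inner_add_right, inner_add_right, inner_sub_right, real_inner_smul_right,
      real_inner_smul_right]
    linear_combination (min t 1) * hns₁ - ((max (t-2) 0) * T₃) * hnm'
  have hfR : ∀ t p, f (F.R t p) =
      ⟪Δ, rot (θf t) (p - c)⟫ + (min t 1) * (μ * L^2) + f c := by
    intro t p
    rw [hR]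
    simp only [hf_def, htrf_def]
    rw [show rot (θf t) (p - c) + ((min t 1) • s₁ - ((max (t-2) 0) * T₃) • m') + c - e₁
        = rot (θf t) (p - c) + ((min t 1) • s₁ - ((max (t-2) 0) * T₃) • m' + (c - e₁)) from by abel,
      inner_add_right, inner_add_right, inner_sub_right, real_inner_smul_right,
      real_inner_smul_right, hΔm', hΔs₁]
    ring
  -- phase facts
  have hθ_early : ∀ t : ℝ, t ≤ 1 → θf t = 0 := by
    intro t ht
    rw [hθf_def]
    simp only
    rw [max_eq_right (by linarith), min_eq_left (by norm_num), mul_zero]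
  have hθ_late : ∀ t : ℝ, 2 ≤ t → θf t = α := by
    intro t ht
    rw [hθf_def]
    simp only
    rw [max_eq_left (by linarith), min_eq_right (by linarith), mul_one]
  have hg_phase3 : ∀ t : ℝ, 2 ≤ t → ∀ p, g (F.R t p) = G p - (t-2)*(T₃*L) := by
    intro t ht p
    rw [hgR, hθ_late t ht, min_eq_right (by linarith), max_eq_left (by linarith), hGfor]
    ring
  have hf_phase3 : ∀ t : ℝ, 2 ≤ t → ∀ p, f (F.R t p) = f (Y p) := by
    intro t ht p
    rw [hfR, hθ_late t ht, min_eq_right (by linarith), hfYcore, hrotin]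
    ring
  have hsplit : ∀ p : Pt, σ * ⟪n, p - c⟫ + g c = g p := by
    intro p
    simp only [hg_def]
    rw [show (p - c : Pt) = (p - e₁) - (c - e₁) from by abel, inner_sub_right]
    ring
  -- positivity of g before tstar
  have h_in_half : ∀ t : ℝ, 0 ≤ t → t < tstar → ∀ p ∈ X₀, 0 < g (F.R t p) := by
    intro t ht0 htlt p hp
    rcases le_or_gt t 1 with h1 | h1
    · rw [hgR, hθ_early t h1, rot_zero, max_eq_right (by linarith)]
      have hmin0 : 0 ≤ min t 1 := le_min ht0 (by norm_num)
      have h2 := hpos p hp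
      have h3 : 0 ≤ min t 1 * (K * L) := mul_nonneg hmin0 (mul_pos hKpos hL).le
      have h4 := hsplit p
      linarith
    · rcases le_or_gt t 2 with h2 | h2
      · rw [hgR, max_eq_right (by linarith), min_eq_right (by linarith)]
        have hb := (abs_le.mp (hrotbound (θf t) p hp)).1
        have hKL : K * L = ρ * L + L := by rw [hK_def]; ring
        linarith
      · rw [hg_phase3 t h2.le]
        have h3 := hA_le p hp
        have h4 : (t-2)*(T₃*L) < (tstar-2)*(T₃*L) := by
          apply mul_lt_mul_of_pos_right _ hT₃Lpos
          linarith
        rw [htstar_mul] at h4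
        linarith
  refine ⟨3, by norm_num, F, ⟨tstar, tstar, by linarith, le_refl _, by linarith, ?_, ?_, ?_⟩, ?_⟩
  · -- crossing at tstar
    intro t ht
    have ht' : t = tstar := le_antisymm ht.2 ht.1
    refine ⟨F.R t pstar, ⟨pstar, hpstar, rfl⟩, ?_⟩
    have hg0 : g (F.R t pstar) = 0 := by
      rw [ht', hg_phase3 tstar (by linarith), htstar_def]
      rw [show (2 + A / (T₃ * L) - 2) = A / (T₃ * L) from by ring, div_mul_cancel₀ _ hT₃Lpos.ne']
      rw [hA_def]; ring
    have hf0 : f (F.R t pstar) = f (Y pstar) := by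
      rw [ht']; exact hf_phase3 tstar (by linarith) pstar
    obtain ⟨hfp1, hfp2⟩ := hfY_bounds pstar hpstar
    apply mem_seg_open e₁ e₂ _ he
    · have hthis : σ * ⟪n, F.R t pstar - e₁⟫ = 0 := hg0
      rcases mul_eq_zero.mp hthis with h' | h'
      · exact absurd h' hσ0
      · exact h'
    · rw [← hΔ_def]
      show 0 < f (F.R t pstar)
      rw [hf0]; exact hfp1
    · rw [← hΔ_def, hΔΔ]
      show f (F.R t pstar) < L^2
      rw [hf0]; exact hfp2
  · -- containment in half-plane before tstar
    intro t ht
    rintro q ⟨p, hp, rfl⟩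
    rw [hHP]
    exact le_of_lt (h_in_half t ht.1 ht.2 p hp)
  · -- endpoints never hit
    intro t ht
    constructor
    · rintro ⟨p, hp, hq⟩
      rcases le_or_gt t 2 with h2 | h2
      · have := h_in_half t ht.1 (by linarith) p hp
        rw [hq, hge₁] at this
        exact lt_irrefl 0 this
      · have hf0 := hf_phase3 t h2.le p
        obtain ⟨hfp1, _⟩ := hfY_bounds p hp
        rw [hq] at hf0
        have : f e₁ = 0 := by simp [hf_def]
        rw [this] at hf0
        linarith [hf0 ▸ hfp1]
    · rintro ⟨p, hp, hq⟩
      rcases le_or_gt t 2 with h2 | h2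
      · have := h_in_half t ht.1 (by linarith) p hp
        rw [hq, hge₂] at this
        exact lt_irrefl 0 this
      · have hf0 := hf_phase3 t h2.le p
        obtain ⟨_, hfp2⟩ := hfY_bounds p hp
        rw [hq, hfe₂] at hf0
        linarith [hf0 ▸ hfp2]
  · -- fully through at time 3
    rintro q ⟨p, hp, rfl⟩
    rw [hHP]
    simp only [mem_compl_iff, mem_setOf_eq, not_le]
    have h1 : g (F.R 3 p) = G p - (T₃*L) := by
      rw [hg_phase3 3 (by norm_num)]; ring_nf
    have h2 := hGub p hp
    show σ * ⟪n, F.R 3 p - e₁⟫ < 0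
    have : g (F.R 3 p) < 0 := by
      rw [h1, hT₃L]; linarith
    exact this

/-- If the width of `X₀` is strictly less than the length of the segment `[e₁, e₂]`
(of positive length, whose line is disjoint from `X₀`, with `X₀` in the interior of the
half-plane `P_I`), then some transformation family passes `X₀` fully through the
segment. -/
theorem passes_fully_through_of_width_lt
    (X₀ : Set Pt) (c : Pt) (hc : c ∈ X₀)
    (hX₀c : IsCompact X₀) (hX₀conv : Convex ℝ X₀) (hX₀int : (interior X₀).Nonempty)
    (e₁ e₂ : Pt) (he : e₁ ≠ e₂)
    (hdisj : lineThrough e₁ e₂ ∩ X₀ = ∅)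
    (hsub : X₀ ⊆ interior (halfPlane e₁ e₂ c))
    (hW : width X₀ < ‖e₂ - e₁‖) :
    ∃ T : ℝ, 0 < T ∧ ∃ F : TransFam c T,
      AttemptsPass F X₀ e₁ e₂ ∧ F.R T '' X₀ ⊆ (halfPlane e₁ e₂ c)ᶜ := by
  by_cases hcase : 0 ≤ ⟪nvec e₁ e₂, c - e₁⟫
  · apply main_aux X₀ c hc hX₀c e₁ e₂ he hdisj hsub hW 1 (by norm_num)
    unfold halfPlane
    rw [if_pos hcase]
    simp
  · apply main_aux X₀ c hc hX₀c e₁ e₂ he hdisj hsub hW (-1) (by norm_num)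
    unfold halfPlane
    rw [if_neg hcase]
    ext p
    simp only [mem_setOf_eq, neg_one_mul, neg_nonneg]


end
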